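/- Let g₆ have (1,0)-basis with dω¹ = i ω¹∧(ω³+ω̄³), dω² = −i ω²∧(ω³+ω̄³), dω³ = ω¹∧ω̄¹ + ω²∧ω̄², and let F be a generic Hermitian form as in 2F = i(r²ω¹∧ω̄¹ + s²ω²∧ω̄² + t²ω³∧ω̄³) + u ω¹∧ω̄² − ū ω²∧ω̄¹ + v ω²∧ω̄³ − v̄ ω³∧ω̄² + z ω¹∧ω̄³ − z̄ ω³∧ω̄¹. Then 2∂∂̄F ∧ F = (4|u|² − t⁴) ω¹²³∧ω̄¹²³. In particular, the first-Gauduchon constant γ₁(F) is positive, zero, or negative according to the sign of 4|u|² − t⁴; F is 1-st Gauduchon (∂∂̄F ∧ F = 0) iff |u| = t²/2, and no Hermitian F on g₆ is SKT. -/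

import Mathlib

noncomputable section

/-- The space of invariant complex forms: the exterior algebra over the span of
`ω¹, ω², ω³, ω̄¹, ω̄², ω̄³` (indexed `0,…,5`). -/
abbrev Lambda : Type := ExteriorAlgebra ℂ (Fin 6 → ℂ)

/-- The generators `ω¹, ω², ω³, ω̄¹, ω̄², ω̄³` as degree-one elements. -/
def w (i : Fin 6) : Lambda := ExteriorAlgebra.ι ℂ (Pi.single i 1)

/-- Antiderivation property (Leibniz rule against `1`-forms): the defining extension
property of (the bigraded pieces of) the Chevalley–Eilenberg differential. -/
def IsAntideriv (D : Lambda →ₗ[ℂ] Lambda) : Prop :=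
  D 1 = 0 ∧ ∀ (v : Fin 6 → ℂ) (x : Lambda),
    D (ExteriorAlgebra.ι ℂ v * x) =
      D (ExteriorAlgebra.ι ℂ v) * x - ExteriorAlgebra.ι ℂ v * D x

/-- The generic Hermitian form
`2F = i(r²ω¹∧ω̄¹ + s²ω²∧ω̄² + t²ω³∧ω̄³) + uω¹∧ω̄² − ūω²∧ω̄¹ + vω²∧ω̄³ − v̄ω³∧ω̄²
  + zω¹∧ω̄³ − z̄ω³∧ω̄¹`. -/
def Fherm (r s t : ℝ) (u v z : ℂ) : Lambda :=
  (1 / 2 : ℂ) •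
    (Complex.I • ((r : ℂ) ^ 2 • (w 0 * w 3) + (s : ℂ) ^ 2 • (w 1 * w 4) +
        (t : ℂ) ^ 2 • (w 2 * w 5)) +
      u • (w 0 * w 4) - (starRingEnd ℂ) u • (w 1 * w 3) +
      v • (w 1 * w 5) - (starRingEnd ℂ) v • (w 2 * w 4) +
      z • (w 0 * w 5) - (starRingEnd ℂ) z • (w 2 * w 3))

/-- Positivity constraints making `Fherm r s t u v z` a Hermitian metric. -/
def HermPos (r s t : ℝ) (u v z : ℂ) : Prop :=
  r ≠ 0 ∧ s ≠ 0 ∧ t ≠ 0 ∧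
  r ^ 2 * s ^ 2 > Complex.normSq u ∧ s ^ 2 * t ^ 2 > Complex.normSq v ∧
  r ^ 2 * t ^ 2 > Complex.normSq z ∧
  r ^ 2 * s ^ 2 * t ^ 2 +
      2 * (Complex.I * (starRingEnd ℂ) u * (starRingEnd ℂ) v * z).re >
    t ^ 2 * Complex.normSq u + r ^ 2 * Complex.normSq v + s ^ 2 * Complex.normSq z


set_option maxRecDepth 40000
set_option maxHeartbeats 2000000

lemma wsq (i : Fin 6) : w i * w i = 0 := ExteriorAlgebra.ι_sq_zero _

lemma wsq' (i : Fin 6) (x : Lambda) : w i * (w i * x) = 0 := by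
  rw [← mul_assoc, wsq, zero_mul]

lemma wswap (i j : Fin 6) (_h : j < i) : w i * w j = -(w j * w i) :=
  eq_neg_of_add_eq_zero_left (ExteriorAlgebra.ι_add_mul_swap _ _)

lemma wswap' (i j : Fin 6) (h : j < i) (x : Lambda) :
    w i * (w j * x) = -(w j * (w i * x)) := by
  rw [← mul_assoc, wswap i j h, neg_mul, mul_assoc]

lemma antider_mul {D : Lambda →ₗ[ℂ] Lambda} (h : IsAntideriv D) (i : Fin 6) (x : Lambda) :
    D (w i * x) = D (w i) * x - w i * D x := h.2 _ x

def detF : ∀ n, ((Fin 6 → ℂ) [⋀^Fin n]→ₗ[ℂ] ℂ)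
  | 6 => Matrix.detRowAlternating
  | _ => 0

lemma detF_six : detF 6 = Matrix.detRowAlternating := rfl

lemma vol_ne : (w 0 * (w 1 * (w 2 * (w 3 * (w 4 * w 5)))) : Lambda) ≠ 0 := by
  intro h
  have hιm : ExteriorAlgebra.ιMulti ℂ 6 (fun i => (Pi.single i 1 : Fin 6 → ℂ)) = 0 := by
    rw [ExteriorAlgebra.ιMulti_apply]
    simpa [List.ofFn_succ, w, Fin.isValue] using h
  have h2 := congrArg (ExteriorAlgebra.liftAlternating detF) hιm
  rw [ExteriorAlgebra.liftAlternating_apply_ιMulti, map_zero] at h2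
  have hv : (fun i => (Pi.single i 1 : Fin 6 → ℂ)) = (1 : Matrix (Fin 6) (Fin 6) ℂ) := by
    ext i j; simp [Matrix.one_apply, Pi.single_apply, eq_comm]
  rw [detF_six, hv] at h2
  rw [show Matrix.detRowAlternating (1 : Matrix (Fin 6) (Fin 6) ℂ) = 1 from Matrix.det_one] at h2
  exact one_ne_zero h2

/-- on `g₆` (`dω¹ = iω¹∧(ω³+ω̄³)`, `dω² = −iω²∧(ω³+ω̄³)`,
`dω³ = ω¹∧ω̄¹ + ω²∧ω̄²`): `2∂∂̄F ∧ F = (4|u|² − t⁴) ω¹²³∧ω̄¹²³`; `F` is 1-st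
Gauduchon iff `|u| = t²/2`, and no Hermitian `F` is SKT. -/
theorem stmt15
    (Dp Db : Lambda →ₗ[ℂ] Lambda) (hDp : IsAntideriv Dp) (hDb : IsAntideriv Db)
    (hp0 : Dp (w 0) = Complex.I • (w 0 * w 2))
    (hp1 : Dp (w 1) = -Complex.I • (w 1 * w 2))
    (hp2 : Dp (w 2) = 0)
    (hp3 : Dp (w 3) = -Complex.I • (w 3 * w 2))
    (hp4 : Dp (w 4) = Complex.I • (w 4 * w 2))
    (hp5 : Dp (w 5) = w 3 * w 0 + w 4 * w 1)
    (hb0 : Db (w 0) = Complex.I • (w 0 * w 5))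
    (hb1 : Db (w 1) = -Complex.I • (w 1 * w 5))
    (hb2 : Db (w 2) = w 0 * w 3 + w 1 * w 4)
    (hb3 : Db (w 3) = -Complex.I • (w 3 * w 5))
    (hb4 : Db (w 4) = Complex.I • (w 4 * w 5))
    (hb5 : Db (w 5) = 0)
    (r s t : ℝ) (u v z : ℂ) (hF : HermPos r s t u v z) :
    (2 : ℂ) • (Dp (Db (Fherm r s t u v z)) * Fherm r s t u v z) =
      ((4 * Complex.normSq u - t ^ 4 : ℝ) : ℂ) • (w 0 * w 1 * w 2 * w 3 * w 4 * w 5) ∧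
    (Dp (Db (Fherm r s t u v z)) * Fherm r s t u v z = 0 ↔ ‖u‖ = t ^ 2 / 2) ∧
    Dp (Db (Fherm r s t u v z)) ≠ 0 := by
  obtain ⟨hr, hs, ht, -⟩ := hF
  have hdb : Db (Fherm r s t u v z) =
      (-(starRingEnd ℂ v)/2) • (w 0 * (w 3 * w 4)) +
      (Complex.I * (t:ℂ)^2/2) • (w 0 * (w 3 * w 5)) +
      (-Complex.I * u) • (w 0 * (w 4 * w 5)) +
      ((starRingEnd ℂ z)/2) • (w 1 * (w 3 * w 4)) +
      (-Complex.I * starRingEnd ℂ u) • (w 1 * (w 3 * w 5)) +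
      (Complex.I * (t:ℂ)^2/2) • (w 1 * (w 4 * w 5)) +
      (-Complex.I * starRingEnd ℂ z/2) • (w 2 * (w 3 * w 5)) +
      (Complex.I * starRingEnd ℂ v/2) • (w 2 * (w 4 * w 5)) := by
    simp (config := { decide := true }) only [Fherm, map_smul, map_add, map_sub, map_neg,
      antider_mul hDb, hb0, hb1, hb2, hb3, hb4, hb5,
      smul_mul_assoc, mul_smul_comm, smul_smul, mul_assoc,
      wswap, wswap', wsq, wsq', mul_add, add_mul, mul_sub, sub_mul,
      neg_mul, mul_neg, neg_neg, smul_neg, neg_smul, mul_zero, zero_mul, smul_zero, zero_smul,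
      sub_zero, zero_sub, add_zero, zero_add]
    match_scalars <;> ring_nf
  have hdpdb : Dp (Db (Fherm r s t u v z)) =
      (Complex.I * (t:ℂ)^2) • (w 0 * (w 1 * (w 3 * w 4))) +
      (2*u) • (w 0 * (w 2 * (w 4 * w 5))) +
      (-2 * starRingEnd ℂ u) • (w 1 * (w 2 * (w 3 * w 5))) := by
    rw [hdb]
    simp (config := { decide := true }) only [map_smul, map_add, map_sub, map_neg,
      antider_mul hDp, hp0, hp1, hp2, hp3, hp4, hp5,
      smul_mul_assoc, mul_smul_comm, smul_smul, mul_assoc,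
      wswap, wswap', wsq, wsq', mul_add, add_mul, mul_sub, sub_mul,
      neg_mul, mul_neg, neg_neg, smul_neg, neg_smul, mul_zero, zero_mul, smul_zero, zero_smul,
      sub_zero, zero_sub, add_zero, zero_add]
    match_scalars <;> ring_nf <;> simp [Complex.I_sq] <;> ring_nf
  have key1 : Dp (Db (Fherm r s t u v z)) * Fherm r s t u v z =
      (2 * u * starRingEnd ℂ u - (t:ℂ)^4/2) • (w 0 * (w 1 * (w 2 * (w 3 * (w 4 * w 5))))) := by
    rw [hdpdb, Fherm]
    simp (config := { decide := true }) only [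
      smul_mul_assoc, mul_smul_comm, smul_smul, mul_assoc,
      wswap, wswap', wsq, wsq', mul_add, add_mul, mul_sub, sub_mul,
      neg_mul, mul_neg, neg_neg, smul_neg, neg_smul, mul_zero, zero_mul, smul_zero, zero_smul,
      sub_zero, zero_sub, add_zero, zero_add]
    match_scalars <;> ring_nf <;> simp [Complex.I_sq] <;> ring_nf
  have key2 : Dp (Db (Fherm r s t u v z)) * (w 2 * w 5) =
      (Complex.I * (t:ℂ)^2) • (w 0 * (w 1 * (w 2 * (w 3 * (w 4 * w 5))))) := by
    rw [hdpdb]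
    simp (config := { decide := true }) only [
      smul_mul_assoc, mul_smul_comm, smul_smul, mul_assoc,
      wswap, wswap', wsq, wsq', mul_add, add_mul, mul_sub, sub_mul,
      neg_mul, mul_neg, neg_neg, smul_neg, neg_smul, mul_zero, zero_mul, smul_zero, zero_smul,
      sub_zero, zero_sub, add_zero, zero_add]
    match_scalars <;> ring_nf
  have hVassoc : (w 0 * w 1 * w 2 * w 3 * w 4 * w 5 : Lambda)
      = w 0 * (w 1 * (w 2 * (w 3 * (w 4 * w 5)))) := by
    simp only [mul_assoc]
  refine ⟨?_, ?_, ?_⟩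
  · rw [key1, hVassoc, smul_smul]
    congr 1
    push_cast [← Complex.mul_conj]
    ring
  · rw [key1, smul_eq_zero]
    simp only [vol_ne, or_false]
    have hc : (2 * u * starRingEnd ℂ u - (t:ℂ)^4/2)
        = (((2 * Complex.normSq u - t^4/2 : ℝ)) : ℂ) := by
      push_cast [← Complex.mul_conj]
      ring
    rw [hc, Complex.ofReal_eq_zero]
    constructor
    · intro h
      have h2 : (‖u‖)^2 = (t^2/2)^2 := by
        rw [Complex.sq_norm]; nlinarith
      have hb : (0:ℝ) < t^2/2 := by positivity
      have h3 : (‖u‖ - t^2/2) * (‖u‖ + t^2/2) = 0 := by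
        linear_combination h2
      rcases mul_eq_zero.mp h3 with h4 | h4
      · linarith
      · exfalso
        have := norm_nonneg u
        linarith
    · intro h
      have : Complex.normSq u = (t^2/2)^2 := by rw [← Complex.sq_norm, h]
      nlinarith
  · intro h0
    rw [h0, zero_mul] at key2
    have := (smul_eq_zero.mp key2.symm).resolve_right vol_ne
    have ht2 : (Complex.I * (t:ℂ)^2) ≠ 0 := by
      apply mul_ne_zero Complex.I_ne_zero
      exact pow_ne_zero _ (by exact_mod_cast ht)
    exact ht2 this
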